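/- Let C be the 6×6 integer matrix [[−4,1,1,0,0,1],[1,−4,1,1,0,0],[1,1,−4,1,1,0],[0,1,1,−4,1,1],[0,0,1,1,−4,1],[1,0,0,1,1,−4]]. Then C is symmetric and negative definite (xᵀCx < 0 for every nonzero x ∈ ℝ⁶), det C = 1183 = 7·13², and C has no roots: there is no x ∈ ℤ⁶ with xᵀCx = −2. -/

import Mathlib

open Matrix

/-- The Gram matrix `C` of the Mordell–Weil lattice: a negative definite even lattice of
rank 6 and determinant `1183 = 7·13²` without roots. -/
def Cmat : Matrix (Fin 6) (Fin 6) ℤ :=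
  !![-4,  1,  1,  0,  0,  1;
      1, -4,  1,  1,  0,  0;
      1,  1, -4,  1,  1,  0;
      0,  1,  1, -4,  1,  1;
      0,  0,  1,  1, -4,  1;
      1,  0,  0,  1,  1, -4]

private lemma vc5 {α : Type*} (a : α) (u : Fin 5 → α) : vecCons a u 5 = u 4 := rfl
private lemma vc4 {α : Type*} (a : α) (u : Fin 4 → α) : vecCons a u 4 = u 3 := rfl
private lemma vc3 {α : Type*} (a : α) (u : Fin 3 → α) : vecCons a u 3 = u 2 := rfl
private lemma vc2 {α : Type*} (a : α) (u : Fin 2 → α) : vecCons a u 2 = u 1 := rfl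
private lemma vc1 {α : Type*} (a : α) (u : Fin 1 → α) : vecCons a u 1 = u 0 := rfl
private lemma vhc {α : Type*} {n : ℕ} (c : α) : vecHead (fun _ : Fin (n+1) => c) = c := rfl
private lemma vtc {α : Type*} {n : ℕ} (c : α) :
    vecTail (fun _ : Fin (n+1) => c) = fun _ => c := rfl

set_option maxHeartbeats 1600000 in
private lemma expandZ (x : Fin 6 → ℤ) : dotProduct x (Cmat.mulVec x) =
    -((x 0 - x 1)^2 + (x 0 - x 2)^2 + (x 0 - x 5)^2 + (x 1 - x 2)^2 + (x 1 - x 3)^2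
      + (x 2 - x 3)^2 + (x 2 - x 4)^2 + (x 3 - x 4)^2 + (x 3 - x 5)^2 + (x 4 - x 5)^2
      + (x 0)^2 + (x 1)^2 + (x 4)^2 + (x 5)^2) := by
  simp [Cmat, dotProduct, Matrix.mulVec, Fin.sum_univ_six, vc5, vc4, vc3, vc2, vc1,
    vhc, vtc]
  ring

set_option maxHeartbeats 1600000 in
private lemma expandR (x : Fin 6 → ℝ) :
    dotProduct x ((Cmat.map ((↑) : ℤ → ℝ)).mulVec x) =
    -((x 0 - x 1)^2 + (x 0 - x 2)^2 + (x 0 - x 5)^2 + (x 1 - x 2)^2 + (x 1 - x 3)^2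
      + (x 2 - x 3)^2 + (x 2 - x 4)^2 + (x 3 - x 4)^2 + (x 3 - x 5)^2 + (x 4 - x 5)^2
      + (x 0)^2 + (x 1)^2 + (x 4)^2 + (x 5)^2) := by
  simp [Cmat, dotProduct, Matrix.mulVec, Matrix.map_apply, Fin.sum_univ_six,
    vc5, vc4, vc3, vc2, vc1, vhc, vtc]
  ring

private lemma sqle2 {z : ℤ} (h : z^2 ≤ 2) : -1 ≤ z ∧ z ≤ 1 := by
  constructor <;> nlinarith

set_option maxHeartbeats 1600000 in
private lemma bounded : ∀ a0 ∈ Finset.Icc (-1:ℤ) 1, ∀ a1 ∈ Finset.Icc (-1:ℤ) 1,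
    ∀ a2 ∈ Finset.Icc (-2:ℤ) 2, ∀ a3 ∈ Finset.Icc (-2:ℤ) 2,
    ∀ a4 ∈ Finset.Icc (-1:ℤ) 1, ∀ a5 ∈ Finset.Icc (-1:ℤ) 1,
    (a0-a1)*(a0-a1) + (a0-a2)*(a0-a2) + (a0-a5)*(a0-a5) + (a1-a2)*(a1-a2) + (a1-a3)*(a1-a3)
      + (a2-a3)*(a2-a3) + (a2-a4)*(a2-a4) + (a3-a4)*(a3-a4) + (a3-a5)*(a3-a5) + (a4-a5)*(a4-a5)
      + a0*a0 + a1*a1 + a4*a4 + a5*a5 ≠ 2 := by decide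

set_option maxHeartbeats 4000000
set_option maxRecDepth 100000

/-- `C` is symmetric, negative definite, has determinant `1183 = 7·13²`,
and has no roots: there is no `x ∈ ℤ⁶` with `xᵀCx = −2`. -/
theorem Cmat_properties :
    Cmat.transpose = Cmat ∧
      (∀ x : Fin 6 → ℝ, x ≠ 0 →
        dotProduct x ((Cmat.map ((↑) : ℤ → ℝ)).mulVec x) < 0) ∧
      Cmat.det = 1183 ∧ (1183 : ℤ) = 7 * 13 ^ 2 ∧
      ¬ ∃ x : Fin 6 → ℤ, dotProduct x (Cmat.mulVec x) = -2 := by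
  refine ⟨by decide, ?_, ?_, by norm_num, ?_⟩
  · intro x hx
    rw [expandR]
    have hpos : (0:ℝ) < x 0^2 + x 1^2 + x 2^2 + x 3^2 + x 4^2 + x 5^2 := by
      by_contra hc
      push_neg at hc
      have sq0 := sq_nonneg (x 0); have sq1 := sq_nonneg (x 1); have sq2 := sq_nonneg (x 2)
      have sq3 := sq_nonneg (x 3); have sq4 := sq_nonneg (x 4); have sq5 := sq_nonneg (x 5)
      have e0 : x 0 = 0 := pow_eq_zero_iff (n := 2) (by norm_num) |>.mp
        (le_antisymm (by linarith) sq0)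
      have e1 : x 1 = 0 := pow_eq_zero_iff (n := 2) (by norm_num) |>.mp
        (le_antisymm (by linarith) sq1)
      have e2 : x 2 = 0 := pow_eq_zero_iff (n := 2) (by norm_num) |>.mp
        (le_antisymm (by linarith) sq2)
      have e3 : x 3 = 0 := pow_eq_zero_iff (n := 2) (by norm_num) |>.mp
        (le_antisymm (by linarith) sq3)
      have e4 : x 4 = 0 := pow_eq_zero_iff (n := 2) (by norm_num) |>.mp
        (le_antisymm (by linarith) sq4)
      have e5 : x 5 = 0 := pow_eq_zero_iff (n := 2) (by norm_num) |>.mp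
        (le_antisymm (by linarith) sq5)
      apply hx
      funext i
      fin_cases i
      exacts [e0, e1, e2, e3, e4, e5]
    nlinarith [hpos, sq_nonneg (x 0 - x 1), sq_nonneg (x 0 - x 2), sq_nonneg (x 0 - x 5),
      sq_nonneg (x 1 - x 2), sq_nonneg (x 1 - x 3), sq_nonneg (x 2 - x 3),
      sq_nonneg (x 2 - x 4), sq_nonneg (x 3 - x 4), sq_nonneg (x 3 - x 5),
      sq_nonneg (x 4 - x 5), sq_nonneg (x 0), sq_nonneg (x 1), sq_nonneg (x 4),
      sq_nonneg (x 5), sq_nonneg (2 * x 0 - x 2), sq_nonneg (2 * x 1 - x 3)]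
  · simp [Cmat, Matrix.det_succ_row_zero, Fin.sum_univ_succ]
    decide
  · rintro ⟨x, hx⟩
    rw [expandZ] at hx
    have e : (x 0 - x 1)^2 + (x 0 - x 2)^2 + (x 0 - x 5)^2 + (x 1 - x 2)^2 + (x 1 - x 3)^2
      + (x 2 - x 3)^2 + (x 2 - x 4)^2 + (x 3 - x 4)^2 + (x 3 - x 5)^2 + (x 4 - x 5)^2
      + (x 0)^2 + (x 1)^2 + (x 4)^2 + (x 5)^2 = 2 := by linarith
    have h01 := sq_nonneg (x 0 - x 1)
    have h02 := sq_nonneg (x 0 - x 2)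
    have h05 := sq_nonneg (x 0 - x 5)
    have h12 := sq_nonneg (x 1 - x 2)
    have h13 := sq_nonneg (x 1 - x 3)
    have h23 := sq_nonneg (x 2 - x 3)
    have h24 := sq_nonneg (x 2 - x 4)
    have h34 := sq_nonneg (x 3 - x 4)
    have h35 := sq_nonneg (x 3 - x 5)
    have h45 := sq_nonneg (x 4 - x 5)
    have h0 := sq_nonneg (x 0)
    have h1 := sq_nonneg (x 1)
    have h4 := sq_nonneg (x 4)
    have h5 := sq_nonneg (x 5)
    have b0 := sqle2 (z := x 0) (by linarith)
    have b1 := sqle2 (z := x 1) (by linarith)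
    have b4 := sqle2 (z := x 4) (by linarith)
    have b5 := sqle2 (z := x 5) (by linarith)
    have b02 := sqle2 (z := x 0 - x 2) (by linarith)
    have b13 := sqle2 (z := x 1 - x 3) (by linarith)
    refine bounded (x 0) ?_ (x 1) ?_ (x 2) ?_ (x 3) ?_ (x 4) ?_ (x 5) ?_
      (by linear_combination e) <;>
      simp only [Finset.mem_Icc] <;> omega
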